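/- Fix k ≥ 2, σ > 0, and pairwise gaps Δ_{ij} ≠ 0 with Δ_min = min_{i<j}|Δ_{ij}| attained by M_min pairs. Define D∞(N) = 1 − (2/(k(k−1))) Σ_{i<j} erf(|Δ_{ij}|√N/(2σ)). Then as N → ∞, D∞(N) ~ (C/2) N^{-1/2} exp(−Δ_min² N/(4σ²)) with C = 8σ M_min / (k(k−1) Δ_min √π). -/

import Mathlib

open Filter MeasureTheory Set


lemma intExp : MeasureTheory.Integrable (fun t:ℝ => Real.exp (-t^2)) := by
  simpa using integrable_exp_neg_mul_sq (one_pos)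

lemma hderivF {t : ℝ} (ht : t ≠ 0) :
    HasDerivAt (fun t : ℝ => -Real.exp (-t^2)/(2*t))
      (Real.exp (-t^2) + Real.exp (-t^2)/(2*t^2)) t := by
  have hg : HasDerivAt (fun t : ℝ => -Real.exp (-t^2)) (-((-2*t) * Real.exp (-t^2))) t := by
    have : HasDerivAt (fun t : ℝ => Real.exp (-t^2)) (Real.exp (-t^2) * (-2*t)) t := by
      have h1 : HasDerivAt (fun t : ℝ => -t^2) (-2*t) t := by
        simpa using ((hasDerivAt_pow 2 t).fun_neg)
      exact (Real.hasDerivAt_exp _).comp t h1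
    simpa [mul_comm] using this.fun_neg
  have hd : HasDerivAt (fun t : ℝ => 2*t) 2 t := by
    simpa using (hasDerivAt_id t).const_mul 2
  have := hg.fun_div hd (by simpa using ht)
  refine this.congr_deriv ?_
  have h2 : (2:ℝ)*t ≠ 0 := by simpa using ht
  field_simp
  ring

lemma hderivH {t : ℝ} (ht : t ≠ 0) :
    HasDerivAt (fun t : ℝ => -Real.exp (-t^2)/(2*t) + Real.exp (-t^2)/(4*t^3))
      (Real.exp (-t^2) - 3*Real.exp (-t^2)/(4*t^4)) t := by
  have hg : HasDerivAt (fun t : ℝ => Real.exp (-t^2)) (Real.exp (-t^2) * (-2*t)) t := by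
    have h1 : HasDerivAt (fun t : ℝ => -t^2) (-2*t) t := by
      simpa using ((hasDerivAt_pow 2 t).fun_neg)
    exact (Real.hasDerivAt_exp _).comp t h1
  have hd : HasDerivAt (fun t : ℝ => 4*t^3) (4*(3*t^2)) t := by
    simpa using (hasDerivAt_pow 3 t).const_mul 4
  have h2 := hg.fun_div hd (by positivity)
  have := (hderivF ht).fun_add h2
  refine this.congr_deriv ?_
  field_simp
  ring

lemma exp_neg_sq_tendsto : Tendsto (fun t : ℝ => Real.exp (-t^2)) atTop (nhds 0) := by
  apply Real.tendsto_exp_atBot.comp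
  apply Filter.tendsto_neg_atBot_iff.mpr
  exact tendsto_pow_atTop (by norm_num)

lemma tendsto_F : Tendsto (fun t : ℝ => -Real.exp (-t^2)/(2*t)) atTop (nhds 0) := by
  have h1 : Tendsto (fun t : ℝ => -Real.exp (-t^2)) atTop (nhds 0) := by
    simpa using exp_neg_sq_tendsto.neg
  have h2 : Tendsto (fun t : ℝ => (2*t)⁻¹) atTop (nhds 0) := by
    apply tendsto_inv_atTop_zero.comp
    exact Tendsto.const_mul_atTop two_pos tendsto_id
  simpa [div_eq_mul_inv] using h1.mul h2

lemma tendsto_H : Tendsto (fun t : ℝ => -Real.exp (-t^2)/(2*t) + Real.exp (-t^2)/(4*t^3))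
    atTop (nhds 0) := by
  have h2 : Tendsto (fun t : ℝ => (4*t^3)⁻¹) atTop (nhds 0) := by
    apply tendsto_inv_atTop_zero.comp
    apply Tendsto.const_mul_atTop (by norm_num : (0:ℝ) < 4)
    exact tendsto_pow_atTop (by norm_num)
  have := tendsto_F.add (exp_neg_sq_tendsto.mul h2)
  simpa [div_eq_mul_inv] using this

lemma int_tail (x : ℝ) (hx : 0 < x) {c : ℝ} (hc : 0 ≤ c) (n : ℕ) :
    IntegrableOn (fun t : ℝ => c * Real.exp (-t^2)/t^n) (Ioi x) := by
  apply Integrable.mono' ((intExp.integrableOn).const_mul (c/x^n))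
  · apply Measurable.aestronglyMeasurable
    exact ((measurable_const.mul (Real.measurable_exp.comp ((measurable_id.pow_const 2).neg))).div
      (measurable_id.pow_const n))
  · filter_upwards [MeasureTheory.ae_restrict_mem measurableSet_Ioi] with t ht
    have htx : x ≤ t := le_of_lt ht
    have ht0 : 0 < t := lt_of_lt_of_le hx htx
    have hpow : x^n ≤ t^n := pow_le_pow_left₀ hx.le htx n
    rw [Real.norm_eq_abs, abs_of_nonneg (by positivity), div_mul_eq_mul_div]
    gcongr

lemma E_upper (x : ℝ) (hx : 0 < x) :
    ∫ t in Ioi x, Real.exp (-t^2) ≤ Real.exp (-x^2)/(2*x) := by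
  have hint2 : IntegrableOn (fun t : ℝ => Real.exp (-t^2)/(2*t^2)) (Ioi x) := by
    have := int_tail x hx (by norm_num : (0:ℝ) ≤ 1/2) 2
    apply this.congr_fun _ measurableSet_Ioi
    intro t _; ring
  have hint : IntegrableOn (fun t : ℝ => Real.exp (-t^2) + Real.exp (-t^2)/(2*t^2)) (Ioi x) :=
    intExp.integrableOn.add hint2
  have key : ∫ t in Ioi x, (Real.exp (-t^2) + Real.exp (-t^2)/(2*t^2)) =
      0 - (-Real.exp (-x^2)/(2*x)) := by
    apply integral_Ioi_of_hasDerivAt_of_tendsto' (f := fun t => -Real.exp (-t^2)/(2*t))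
      (fun t ht => hderivF (ne_of_gt (lt_of_lt_of_le hx ht.out))) hint tendsto_F
  have hle : ∫ t in Ioi x, Real.exp (-t^2) ≤
      ∫ t in Ioi x, (Real.exp (-t^2) + Real.exp (-t^2)/(2*t^2)) := by
    apply setIntegral_mono_on intExp.integrableOn hint measurableSet_Ioi
    intro t ht
    have ht0 : 0 < t := lt_trans hx ht
    have : 0 ≤ Real.exp (-t^2)/(2*t^2) := by positivity
    linarith
  rw [key] at hle
  simp only [neg_div, zero_sub, neg_neg] at hle
  linarith

lemma E_lower (x : ℝ) (hx : 0 < x) :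
    Real.exp (-x^2)/(2*x) - Real.exp (-x^2)/(4*x^3) ≤ ∫ t in Ioi x, Real.exp (-t^2) := by
  have hint2 : IntegrableOn (fun t : ℝ => 3*Real.exp (-t^2)/(4*t^4)) (Ioi x) := by
    have := int_tail x hx (by norm_num : (0:ℝ) ≤ 3/4) 4
    apply this.congr_fun _ measurableSet_Ioi
    intro t _; ring
  have hint : IntegrableOn (fun t : ℝ => Real.exp (-t^2) - 3*Real.exp (-t^2)/(4*t^4)) (Ioi x) :=
    intExp.integrableOn.sub hint2
  have key : ∫ t in Ioi x, (Real.exp (-t^2) - 3*Real.exp (-t^2)/(4*t^4)) =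
      0 - (-Real.exp (-x^2)/(2*x) + Real.exp (-x^2)/(4*x^3)) := by
    apply integral_Ioi_of_hasDerivAt_of_tendsto' (f := fun t => -Real.exp (-t^2)/(2*t) + Real.exp (-t^2)/(4*t^3))
      (fun t ht => hderivH (ne_of_gt (lt_of_lt_of_le hx ht.out))) hint tendsto_H
  have hle : ∫ t in Ioi x, (Real.exp (-t^2) - 3*Real.exp (-t^2)/(4*t^4)) ≤
      ∫ t in Ioi x, Real.exp (-t^2) := by
    apply setIntegral_mono_on hint intExp.integrableOn measurableSet_Ioi
    intro t ht
    have ht0 : 0 < t := lt_trans hx ht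
    have : 0 ≤ 3*Real.exp (-t^2)/(4*t^4) := by positivity
    linarith
  rw [key] at hle
  simp only [neg_div, zero_sub, neg_add_rev, neg_neg] at hle
  linarith

lemma E_nonneg (x : ℝ) : 0 ≤ ∫ t in Ioi x, Real.exp (-t^2) :=
  setIntegral_nonneg measurableSet_Ioi (fun t _ => Real.exp_nonneg _)

lemma tendsto_main : Tendsto (fun x : ℝ => 2*x*Real.exp (x^2) * ∫ t in Ioi x, Real.exp (-t^2))
    atTop (nhds 1) := by
  have hlow : Tendsto (fun x : ℝ => 1 - 1/(2*x^2)) atTop (nhds 1) := by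
    have : Tendsto (fun x : ℝ => 1/(2*x^2)) atTop (nhds 0) := by
      simp only [one_div]
      apply tendsto_inv_atTop_zero.comp
      exact Tendsto.const_mul_atTop two_pos (tendsto_pow_atTop (by norm_num))
    simpa using (tendsto_const_nhds (x := (1:ℝ))).sub this
  apply tendsto_of_tendsto_of_tendsto_of_le_of_le' hlow tendsto_const_nhds
  · filter_upwards [eventually_gt_atTop (0:ℝ)] with x hx
    have h := E_lower x hx
    have hex : Real.exp (x^2) * Real.exp (-x^2) = 1 := by
      rw [← Real.exp_add]; simp
    have h2 := mul_le_mul_of_nonneg_left h (by positivity : (0:ℝ) ≤ 2*x*Real.exp (x^2))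
    calc 1 - 1/(2*x^2) = 2*x*Real.exp (x^2) * (Real.exp (-x^2)/(2*x) - Real.exp (-x^2)/(4*x^3)) := by
          rw [Real.exp_neg]
          field_simp
          ring
      _ ≤ _ := h2
  · filter_upwards [eventually_gt_atTop (0:ℝ)] with x hx
    have h := E_upper x hx
    have hex : Real.exp (x^2) * Real.exp (-x^2) = 1 := by
      rw [← Real.exp_add]; simp
    have h2 := mul_le_mul_of_nonneg_left h (by positivity : (0:ℝ) ≤ 2*x*Real.exp (x^2))
    calc 2*x*Real.exp (x^2) * ∫ t in Ioi x, Real.exp (-t^2) ≤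
        2*x*Real.exp (x^2) * (Real.exp (-x^2)/(2*x)) := h2
      _ = 1 := by rw [Real.exp_neg]; field_simp

lemma tendsto_sqrt_atTop : Tendsto Real.sqrt atTop atTop := by
  apply tendsto_atTop_atTop_of_monotone (fun a b h => Real.sqrt_le_sqrt h)
  intro b
  exact ⟨(max b 0)^2, by rw [Real.sqrt_sq (le_max_right b 0)]; exact le_max_left b 0⟩

/-- The Gauss error function `erf x = (2/√π) ∫₀ˣ e^{-t²} dt`. -/
noncomputable def erf (x : ℝ) : ℝ :=
  (2 / Real.sqrt Real.pi) * ∫ t in (0:ℝ)..x, Real.exp (-t ^ 2)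


lemma int_Ioi_zero : ∫ t in Ioi (0:ℝ), Real.exp (-t^2) = Real.sqrt Real.pi / 2 := by
  simpa using integral_gaussian_Ioi 1

lemma one_sub_erf {x : ℝ} (hx : 0 ≤ x) :
    1 - erf x = (2/Real.sqrt Real.pi) * ∫ t in Ioi x, Real.exp (-t^2) := by
  have hπ : Real.sqrt Real.pi ≠ 0 := ne_of_gt (Real.sqrt_pos.mpr Real.pi_pos)
  have hsplit : (∫ t in Ioc (0:ℝ) x, Real.exp (-t^2)) + ∫ t in Ioi x, Real.exp (-t^2)
      = ∫ t in Ioi (0:ℝ), Real.exp (-t^2) := by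
    rw [← setIntegral_union (Ioc_disjoint_Ioi le_rfl) measurableSet_Ioi
      intExp.integrableOn intExp.integrableOn, Ioc_union_Ioi_eq_Ioi hx]
  have h2 : (∫ t in Ioc (0:ℝ) x, Real.exp (-t^2))
      = Real.sqrt Real.pi/2 - ∫ t in Ioi x, Real.exp (-t^2) := by
    rw [← int_Ioi_zero, ← hsplit]; ring
  rw [erf, intervalIntegral.integral_of_le hx]
  rw [show (fun t : ℝ => Real.exp (-t ^ 2)) = (fun t : ℝ => Real.exp (-t^2)) from rfl, h2]
  field_simp
  ring

/-- Asymptotic rate of the expected Kendall-τ disagreement between a benchmark of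
size `N` and the oracle ranking: `D∞(N) ~ (C/2) N^{-1/2} exp(−Δ_min² N/(4σ²))`
with `C = 8σ M_min/(k(k−1)Δ_min√π)`. -/
theorem kendall_tau_oracle_disagreement_asymptotic
    (k : ℕ) (hk : 2 ≤ k) (σ : ℝ) (hσ : 0 < σ)
    (Δ : Fin k → Fin k → ℝ) (hΔ : ∀ i j : Fin k, i < j → Δ i j ≠ 0)
    (P : Finset (Fin k × Fin k))
    (hP : P = Finset.univ.filter (fun p : Fin k × Fin k => p.1 < p.2))
    (hPne : P.Nonempty)
    (Δmin : ℝ) (hmin : Δmin = P.inf' hPne (fun p => |Δ p.1 p.2|))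
    (Mmin : ℕ) (hM : Mmin = (P.filter (fun p => |Δ p.1 p.2| = Δmin)).card) :
    Tendsto (fun N : ℕ =>
        (1 - (2 / ((k : ℝ) * ((k : ℝ) - 1))) *
            ∑ p ∈ P, erf (|Δ p.1 p.2| * Real.sqrt N / (2 * σ))) /
          ((8 * σ * (Mmin : ℝ) / ((k : ℝ) * ((k : ℝ) - 1) * Δmin * Real.sqrt Real.pi)) / 2 /
              Real.sqrt N * Real.exp (-(Δmin ^ 2 * N) / (4 * σ ^ 2))))
      atTop (nhds 1) := by
  have hk2 : (2:ℝ) ≤ (k:ℝ) := by exact_mod_cast hk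
  have hK : (0:ℝ) < (k:ℝ) * ((k:ℝ) - 1) := by nlinarith
  have hπ : (0:ℝ) < Real.sqrt Real.pi := Real.sqrt_pos.mpr Real.pi_pos
  have hΔpos : ∀ p ∈ P, 0 < |Δ p.1 p.2| := by
    intro p hp
    rw [hP, Finset.mem_filter] at hp
    exact abs_pos.mpr (hΔ _ _ hp.2)
  have hΔminpos : 0 < Δmin := by
    rw [hmin, Finset.lt_inf'_iff]
    exact hΔpos
  have hΔge : ∀ p ∈ P, Δmin ≤ |Δ p.1 p.2| := by
    intro p hp; rw [hmin]; exact Finset.inf'_le _ hp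
  have hMpos : 0 < Mmin := by
    obtain ⟨p, hp, hpeq⟩ := Finset.exists_mem_eq_inf' hPne (fun p => |Δ p.1 p.2|)
    rw [hM]
    exact Finset.card_pos.mpr ⟨p, Finset.mem_filter.mpr ⟨hp, by rw [← hpeq, hmin]⟩⟩
  have hMposR : (0:ℝ) < (Mmin:ℝ) := by exact_mod_cast hMpos
  -- card of P
  have hcard : 2 * P.card = k * k - k := by
    have hswap : (Finset.univ.filter (fun p : Fin k × Fin k => p.1 < p.2)).card
        = (Finset.univ.filter (fun p : Fin k × Fin k => p.2 < p.1)).card := by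
      apply Finset.card_bij (fun p _ => Prod.swap p)
      · intro a ha; simp only [Finset.mem_filter, Finset.mem_univ, true_and] at ha ⊢
        exact ha
      · intro a _ b _ h; exact Prod.swap_injective h
      · intro b hb
        refine ⟨Prod.swap b, ?_, by simp⟩
        simp only [Finset.mem_filter, Finset.mem_univ, true_and] at hb ⊢
        exact hb
    have hdisj : Disjoint (Finset.univ.filter (fun p : Fin k × Fin k => p.1 < p.2))
        (Finset.univ.filter (fun p : Fin k × Fin k => p.2 < p.1)) := by
      rw [Finset.disjoint_left]
      intro p hp hq
      simp only [Finset.mem_filter] at hp hq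
      exact absurd hq.2 (not_lt.mpr hp.2.le)
    have hunion : (Finset.univ.filter (fun p : Fin k × Fin k => p.1 < p.2)) ∪
        (Finset.univ.filter (fun p : Fin k × Fin k => p.2 < p.1))
        = (Finset.univ : Finset (Fin k)).offDiag := by
      ext p
      simp only [Finset.mem_union, Finset.mem_filter, Finset.mem_univ, true_and,
        Finset.mem_offDiag, ne_eq]
      constructor
      · intro h he
        rcases h with h | h <;> rw [he] at h <;> exact lt_irrefl _ h
      · intro h
        exact lt_or_gt_of_ne h
    have hcu := Finset.card_union_of_disjoint hdisj
    rw [hunion, Finset.offDiag_card, Finset.card_univ, Fintype.card_fin] at hcu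
    rw [hP]
    omega
  have hcardR : ((P.card : ℝ)) * 2 = (k:ℝ) * ((k:ℝ) - 1) := by
    have hkk : k ≤ k * k := Nat.le_mul_of_pos_left k (by omega)
    have : (2 * P.card : ℝ) = ((k*k : ℕ) : ℝ) - (k:ℝ) := by
      rw [← Nat.cast_ofNat, ← Nat.cast_mul, hcard]
      push_cast [Nat.cast_sub hkk]
      ring
    push_cast at this
    linarith
  set c : Fin k × Fin k → ℝ := fun p => |Δ p.1 p.2| / (2*σ) with hc
  set c0 : ℝ := Δmin / (2*σ) with hc0
  have hc0pos : 0 < c0 := by positivity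
  set f : (Fin k × Fin k) → ℕ → ℝ := fun p N =>
    2*c0*Real.sqrt N*Real.exp (c0^2*N) * ∫ t in Ioi (c p * Real.sqrt N), Real.exp (-t^2)
    with hf
  have hterm : ∀ p ∈ P, Tendsto (f p) atTop
      (nhds (if |Δ p.1 p.2| = Δmin then 1 else 0)) := by
    intro p hp
    by_cases hpe : |Δ p.1 p.2| = Δmin
    · rw [if_pos hpe]
      have hcp : c p = c0 := by show |Δ p.1 p.2| / (2*σ) = Δmin / (2*σ); rw [hpe]
      have hcomp : Tendsto (fun N : ℕ => c0 * Real.sqrt N) atTop atTop :=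
        Tendsto.const_mul_atTop hc0pos (tendsto_sqrt_atTop.comp tendsto_natCast_atTop_atTop)
      have := tendsto_main.comp hcomp
      apply this.congr
      intro N
      simp only [Function.comp, hf, hcp]
      have hsq : (c0 * Real.sqrt N)^2 = c0^2 * N := by
        rw [mul_pow, Real.sq_sqrt (Nat.cast_nonneg N)]
      rw [hsq]
      ring_nf
    · rw [if_neg hpe]
      have hcplt : c0 < c p := by
        have hlt := lt_of_le_of_ne (hΔge p hp) (Ne.symm hpe)
        show Δmin / (2*σ) < |Δ p.1 p.2| / (2*σ)
        gcongr
      have hcppos : 0 < c p := lt_trans hc0pos hcplt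
      have hg : Tendsto (fun N : ℕ => (c0/c p) * Real.exp ((c0^2 - (c p)^2) * N)) atTop (nhds 0) := by
        have h1 : Tendsto (fun N : ℕ => ((c0^2 - (c p)^2) * N)) atTop atBot := by
          have hneg : c0^2 - (c p)^2 < 0 := by nlinarith
          have hN : Tendsto (fun N : ℕ => ((c p)^2 - c0^2) * N) atTop atTop :=
            Tendsto.const_mul_atTop (by linarith) tendsto_natCast_atTop_atTop
          have : Tendsto (fun N : ℕ => -(((c p)^2 - c0^2) * N)) atTop atBot :=
            Filter.tendsto_neg_atBot_iff.mpr hN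
          apply this.congr
          intro N; ring
        have := Real.tendsto_exp_atBot.comp h1
        simpa using (this.const_mul (c0/c p))
      apply tendsto_of_tendsto_of_tendsto_of_le_of_le' tendsto_const_nhds hg
      · filter_upwards with N
        rw [hf]
        have := E_nonneg (c p * Real.sqrt N)
        positivity
      · filter_upwards [eventually_ge_atTop 1] with N hN
        have hNpos : (0:ℝ) < Real.sqrt N := Real.sqrt_pos.mpr (by exact_mod_cast Nat.lt_of_lt_of_le Nat.zero_lt_one hN)
        have hb := E_upper (c p * Real.sqrt N) (by positivity)
        rw [hf]
        calc 2*c0*Real.sqrt N*Real.exp (c0^2*N) * ∫ t in Ioi (c p * Real.sqrt N), Real.exp (-t^2)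
            ≤ 2*c0*Real.sqrt N*Real.exp (c0^2*N) * (Real.exp (-(c p * Real.sqrt N)^2)/(2*(c p * Real.sqrt N))) := by
              apply mul_le_mul_of_nonneg_left hb (by positivity)
          _ = (c0/c p) * Real.exp ((c0^2 - (c p)^2) * N) := by
              rw [show -(c p * Real.sqrt N)^2 = -((c p)^2 * N) by
                rw [mul_pow, Real.sq_sqrt (Nat.cast_nonneg N)]]
              rw [show (c0^2 - (c p)^2) * (N:ℝ) = c0^2*N + -((c p)^2*N) by ring, Real.exp_add]
              field_simp
  have hsum : Tendsto (fun N : ℕ => (∑ p ∈ P, f p N) / (Mmin:ℝ)) atTop (nhds 1) := by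
    have h1 : Tendsto (fun N : ℕ => ∑ p ∈ P, f p N) atTop
        (nhds (∑ p ∈ P, if |Δ p.1 p.2| = Δmin then (1:ℝ) else 0)) :=
      tendsto_finset_sum _ hterm
    have h2 : (∑ p ∈ P, if |Δ p.1 p.2| = Δmin then (1:ℝ) else 0) = (Mmin:ℝ) := by
      rw [Finset.sum_boole, hM]
    rw [h2] at h1
    simpa [div_self (ne_of_gt hMposR)] using h1.div_const (Mmin:ℝ)
  apply hsum.congr'
  filter_upwards [eventually_ge_atTop 1] with N hN
  have hNpos : (0:ℝ) < Real.sqrt N := Real.sqrt_pos.mpr (by exact_mod_cast Nat.lt_of_lt_of_le Nat.zero_lt_one hN)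
  -- rewrite the numerator
  have harg : ∀ p ∈ P, erf (|Δ p.1 p.2| * Real.sqrt N / (2 * σ)) = erf (c p * Real.sqrt N) := by
    intro p _; rw [hc]; ring_nf
  have hnum : 1 - (2 / ((k : ℝ) * ((k : ℝ) - 1))) *
      ∑ p ∈ P, erf (|Δ p.1 p.2| * Real.sqrt N / (2 * σ))
      = (2 / ((k : ℝ) * ((k : ℝ) - 1))) * ((2/Real.sqrt Real.pi) *
        ∑ p ∈ P, ∫ t in Ioi (c p * Real.sqrt N), Real.exp (-t^2)) := by
    rw [Finset.sum_congr rfl harg]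
    have hsum2 : ∑ p ∈ P, (1 - erf (c p * Real.sqrt N))
        = (2/Real.sqrt Real.pi) * ∑ p ∈ P, ∫ t in Ioi (c p * Real.sqrt N), Real.exp (-t^2) := by
      rw [Finset.mul_sum]
      apply Finset.sum_congr rfl
      intro p hp
      rw [one_sub_erf (by have := hΔpos p hp; positivity)]
    have hsum1 : ∑ p ∈ P, erf (c p * Real.sqrt N)
        = (P.card : ℝ) - ∑ p ∈ P, (1 - erf (c p * Real.sqrt N)) := by
      rw [Finset.sum_sub_distrib, Finset.sum_const, nsmul_eq_mul, mul_one]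
      ring
    rw [hsum1, hsum2, mul_sub]
    have hone : (2 / ((k:ℝ) * ((k:ℝ) - 1))) * (P.card : ℝ) = 1 := by
      rw [div_mul_eq_mul_div, div_eq_one_iff_eq hK.ne']
      linarith [hcardR]
    rw [hone]
    ring
  rw [hnum]
  have hexp : Real.exp (-(Δmin ^ 2 * N) / (4 * σ ^ 2)) = Real.exp (-(c0^2 * N)) := by
    congr 1
    rw [hc0]
    field_simp
    ring
  rw [hexp]
  rw [show (∑ p ∈ P, f p N) = 2*c0*Real.sqrt N*Real.exp (c0^2*N) *
      ∑ p ∈ P, ∫ t in Ioi (c p * Real.sqrt N), Real.exp (-t^2) by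
    rw [Finset.mul_sum]]
  set S := ∑ p ∈ P, ∫ t in Ioi (c p * Real.sqrt N), Real.exp (-t^2)
  rw [Real.exp_neg]
  rw [hc0]
  have he : Real.exp (c0^2 * N) ≠ 0 := Real.exp_ne_zero _
  have hk1 : (k:ℝ) - 1 ≠ 0 := by linarith
  field_simp
  ring
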